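/- Let m > n ≥ 3 be integers and let E = {x ∈ ℝ^m : |x| ≥ 1}. Then there exists a constant C > 0 such that for every h ∈ L²(E), the function 𝒢h defined by 𝒢h(z) = ∫_E |h(x)| / ( |x|^{m-2} |z|^{m-2} (|x|+|z|)^n ) dx satisfies ‖𝒢h‖_{L²(E)} ≤ C ‖h‖_{L²(E)}. -/

import Mathlib

open MeasureTheory Set
open scoped ENNReal

private lemma opG_aux_memL2 (m k : ℕ) (hk : m < 2 * k) :
    MemLp (fun x : EuclideanSpace ℝ (Fin m) => (‖x‖ ^ k)⁻¹) 2
      (volume.restrict {x : EuclideanSpace ℝ (Fin m) | 1 ≤ ‖x‖}) := by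
  set E : Set (EuclideanSpace ℝ (Fin m)) := {x | 1 ≤ ‖x‖}
  have hEmeas : MeasurableSet E := by
    have : E = (fun x : EuclideanSpace ℝ (Fin m) => ‖x‖) ⁻¹' Ici 1 := rfl
    rw [this]; exact measurable_norm measurableSet_Ici
  have hmeas : Measurable (fun x : EuclideanSpace ℝ (Fin m) => (‖x‖ ^ k)⁻¹) :=
    ((measurable_norm).pow_const k).inv
  rw [memLp_two_iff_integrable_sq hmeas.aestronglyMeasurable]
  have hfr : (Module.finrank ℝ (EuclideanSpace ℝ (Fin m)) : ℝ) < (2 * k : ℕ) := by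
    rw [finrank_euclideanSpace_fin]; exact_mod_cast hk
  have hint : Integrable (fun x : EuclideanSpace ℝ (Fin m) =>
      (2 : ℝ) ^ (2 * k) * (1 + ‖x‖) ^ (-(2 * k : ℕ) : ℝ)) volume :=
    (integrable_one_add_norm hfr).const_mul _
  refine Integrable.mono (hint.restrict (s := E))
    ((hmeas.pow_const 2).aestronglyMeasurable) ?_
  filter_upwards [ae_restrict_mem hEmeas] with x hx
  have hx1 : (1 : ℝ) ≤ ‖x‖ := hx
  have hxpos : (0 : ℝ) < ‖x‖ := lt_of_lt_of_le one_pos hx1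
  have h1 : (1 + ‖x‖) ^ (-(2 * k : ℕ) : ℝ) = ((1 + ‖x‖) ^ (2 * k))⁻¹ := by
    rw [Real.rpow_neg (by positivity), Real.rpow_natCast]
  have h2 : (1 + ‖x‖) ^ (2 * k) ≤ (2 : ℝ) ^ (2 * k) * ‖x‖ ^ (2 * k) := by
    calc (1 + ‖x‖) ^ (2 * k) ≤ (2 * ‖x‖) ^ (2 * k) :=
          pow_le_pow_left₀ (by positivity) (by linarith) _
      _ = (2 : ℝ) ^ (2 * k) * ‖x‖ ^ (2 * k) := mul_pow _ _ _
  have hlhs : ‖((‖x‖ ^ k)⁻¹) ^ 2‖ = (‖x‖ ^ (2 * k))⁻¹ := by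
    rw [Real.norm_eq_abs, abs_of_nonneg (by positivity), ← inv_pow, ← pow_mul, mul_comm k 2,
      inv_pow]
  rw [hlhs]
  have hrhs : ‖(2 : ℝ) ^ (2 * k) * (1 + ‖x‖) ^ (-(2 * k : ℕ) : ℝ)‖
      = (2 : ℝ) ^ (2 * k) * ((1 + ‖x‖) ^ (2 * k))⁻¹ := by
    rw [h1, Real.norm_eq_abs, abs_of_nonneg (by positivity)]
  rw [hrhs, inv_eq_one_div, ← div_eq_mul_inv,
    div_le_div_iff₀ (by positivity) (by positivity), one_mul]
  linarith

/-- L² boundedness of the operator 𝒢 of Section 3.1: for integers `m > n ≥ 3` and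
`E = {x ∈ ℝ^m : |x| ≥ 1}`, there is `C > 0` such that for every `h ∈ L²(E)`,
`‖𝒢h‖_{L²(E)} ≤ C ‖h‖_{L²(E)}` where
`𝒢h(z) = ∫_E |h(x)| / (|x|^{m-2} |z|^{m-2} (|x|+|z|)^n) dx`. -/
theorem opG_L2_bounded (m n : ℕ) (hn : 3 ≤ n) (hmn : n < m) :
    ∃ C > 0, ∀ h : EuclideanSpace ℝ (Fin m) → ℝ,
      MemLp h 2 (volume.restrict {x : EuclideanSpace ℝ (Fin m) | 1 ≤ ‖x‖}) →
      eLpNorm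
          (fun z : EuclideanSpace ℝ (Fin m) =>
            ∫ x in {x : EuclideanSpace ℝ (Fin m) | 1 ≤ ‖x‖},
              |h x| / (‖x‖ ^ (m - 2) * ‖z‖ ^ (m - 2) * (‖x‖ + ‖z‖) ^ n)) 2
          (volume.restrict {x : EuclideanSpace ℝ (Fin m) | 1 ≤ ‖x‖}) ≤
        ENNReal.ofReal C *
          eLpNorm h 2 (volume.restrict {x : EuclideanSpace ℝ (Fin m) | 1 ≤ ‖x‖}) := by
  classical
  set E : Set (EuclideanSpace ℝ (Fin m)) := {x | 1 ≤ ‖x‖} with hE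
  set μ : Measure (EuclideanSpace ℝ (Fin m)) := volume.restrict E with hμ
  have hEmeas : MeasurableSet E := by
    have : E = (fun x : EuclideanSpace ℝ (Fin m) => ‖x‖) ⁻¹' Ici 1 := rfl
    rw [this]; exact measurable_norm measurableSet_Ici
  set F : EuclideanSpace ℝ (Fin m) → ℝ := fun x => (‖x‖ ^ (m - 1))⁻¹ with hFdef
  set G : EuclideanSpace ℝ (Fin m) → ℝ := fun z => (‖z‖ ^ (m + n - 3))⁻¹ with hGdef
  have hF : MemLp F 2 μ := opG_aux_memL2 m (m - 1) (by omega)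
  have hG : MemLp G 2 μ := opG_aux_memL2 m (m + n - 3) (by omega)
  set C : ℝ := (eLpNorm F 2 μ * eLpNorm G 2 μ).toReal + 1 with hCdef
  have hFG_ne_top : eLpNorm F 2 μ * eLpNorm G 2 μ ≠ ⊤ :=
    ENNReal.mul_ne_top hF.eLpNorm_ne_top hG.eLpNorm_ne_top
  have hCpos : 0 < C := by positivity
  refine ⟨C, hCpos, fun h hh => ?_⟩
  -- `c` is the constant `∫ |h| F`
  set c : ℝ := ∫ x in E, |h x| * F x ∂volume with hc
  have hFnonneg : ∀ x, 0 ≤ F x := fun x => by positivity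
  have hGnonneg : ∀ z, 0 ≤ G z := fun z => by positivity
  have hcnonneg : 0 ≤ c :=
    integral_nonneg fun x => mul_nonneg (abs_nonneg _) (hFnonneg x)
  -- integrability of `|h| * F`
  have hhabs : MemLp (fun x => |h x|) 2 μ := by
    have := hh.norm
    simpa [Real.norm_eq_abs] using this
  have hInt1 : Integrable (fun x => |h x| * F x) μ := by
    rw [← memLp_one_iff_integrable]
    exact hF.smul (𝕜 := ℝ) hhabs (hpqr := ⟨by simp [ENNReal.inv_two_add_inv_two]⟩)
  -- pointwise domination of the kernel
  have key : ∀ x ∈ E, ∀ z ∈ E,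
      |h x| / (‖x‖ ^ (m - 2) * ‖z‖ ^ (m - 2) * (‖x‖ + ‖z‖) ^ n)
        ≤ (|h x| * F x) * G z := by
    intro x hx z hz
    have ha : (1 : ℝ) ≤ ‖x‖ := hx
    have hb : (1 : ℝ) ≤ ‖z‖ := hz
    have hapos : (0 : ℝ) < ‖x‖ := lt_of_lt_of_le one_pos ha
    have hbpos : (0 : ℝ) < ‖z‖ := lt_of_lt_of_le one_pos hb
    set a := ‖x‖; set b := ‖z‖
    have hstep : a * b ^ (n - 1) ≤ (a + b) ^ n := by
      calc a * b ^ (n - 1) ≤ (a + b) * (a + b) ^ (n - 1) := by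
            refine mul_le_mul (by linarith) (pow_le_pow_left₀ (by positivity) (by linarith) _)
              (by positivity) (by positivity)
        _ = (a + b) ^ n := by rw [← pow_succ']; congr 1; omega
    have e1 : a ^ (m - 1) = a ^ (m - 2) * a := by rw [← pow_succ]; congr 1; omega
    have e2 : b ^ (m + n - 3) = b ^ (m - 2) * b ^ (n - 1) := by
      rw [← pow_add]; congr 1; omega
    have hPD : a ^ (m - 1) * b ^ (m + n - 3)
        ≤ a ^ (m - 2) * b ^ (m - 2) * (a + b) ^ n := by
      calc a ^ (m - 1) * b ^ (m + n - 3)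
          = a ^ (m - 2) * b ^ (m - 2) * (a * b ^ (n - 1)) := by rw [e1, e2]; ring
        _ ≤ a ^ (m - 2) * b ^ (m - 2) * (a + b) ^ n :=
            mul_le_mul_of_nonneg_left hstep (by positivity)
    have hPpos : (0 : ℝ) < a ^ (m - 1) * b ^ (m + n - 3) := by positivity
    calc |h x| / (a ^ (m - 2) * b ^ (m - 2) * (a + b) ^ n)
        ≤ |h x| / (a ^ (m - 1) * b ^ (m + n - 3)) := by
          gcongr
      _ = (|h x| * F x) * G z := by
          rw [div_eq_mul_inv, mul_inv]
          ring
  -- pointwise bound on the operator by a rank-one operator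
  have hmono : eLpNorm
      (fun z : EuclideanSpace ℝ (Fin m) =>
        ∫ x in E, |h x| / (‖x‖ ^ (m - 2) * ‖z‖ ^ (m - 2) * (‖x‖ + ‖z‖) ^ n)) 2 μ
      ≤ eLpNorm (fun z => c * G z) 2 μ := by
    refine eLpNorm_mono_ae ?_
    filter_upwards [ae_restrict_mem hEmeas] with z hz
    have hTnonneg : 0 ≤ ∫ x in E, |h x| / (‖x‖ ^ (m - 2) * ‖z‖ ^ (m - 2) * (‖x‖ + ‖z‖) ^ n) :=
      integral_nonneg fun x => div_nonneg (abs_nonneg _) (by positivity)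
    rw [Real.norm_eq_abs, Real.norm_eq_abs, abs_of_nonneg hTnonneg,
      abs_of_nonneg (mul_nonneg hcnonneg (hGnonneg z))]
    have hbound : (∫ x in E, |h x| / (‖x‖ ^ (m - 2) * ‖z‖ ^ (m - 2) * (‖x‖ + ‖z‖) ^ n))
        ≤ ∫ x in E, (|h x| * F x) * G z ∂volume := by
      refine integral_mono_of_nonneg ?_ (hInt1.mul_const (G z)) ?_
      · exact Filter.Eventually.of_forall fun x => div_nonneg (abs_nonneg _) (by positivity)
      · filter_upwards [ae_restrict_mem hEmeas] with x hx
        exact key x hx z hz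
    calc (∫ x in E, |h x| / (‖x‖ ^ (m - 2) * ‖z‖ ^ (m - 2) * (‖x‖ + ‖z‖) ^ n))
        ≤ ∫ x in E, (|h x| * F x) * G z ∂volume := hbound
      _ = c * G z := by rw [integral_mul_const]
  -- compute the eLpNorm of the rank-one bound
  have hsmul : eLpNorm (fun z => c * G z) 2 μ = ENNReal.ofReal c * eLpNorm G 2 μ := by
    have : (fun z => c * G z) = c • G := by funext z; simp [smul_eq_mul]
    rw [this, eLpNorm_const_smul, ← ofReal_norm, Real.norm_eq_abs,
      abs_of_nonneg hcnonneg]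
  -- Cauchy–Schwarz for `c`
  have h22 : (2 : ℝ).HolderConjugate 2 := Real.HolderConjugate.two_two
  have hh2 : MemLp h (ENNReal.ofReal 2) μ := by
    rwa [show ENNReal.ofReal 2 = 2 by norm_num]
  have hF2 : MemLp F (ENNReal.ofReal 2) μ := by
    rwa [show ENNReal.ofReal 2 = 2 by norm_num]
  have hCS : c ≤ (∫ x, ‖h x‖ ^ (2 : ℝ) ∂μ) ^ ((1 : ℝ) / 2)
      * (∫ x, ‖F x‖ ^ (2 : ℝ) ∂μ) ^ ((1 : ℝ) / 2) := by
    have hceq : c = ∫ x, ‖h x‖ * ‖F x‖ ∂μ := by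
      rw [hc, hμ]
      refine integral_congr_ae (Filter.Eventually.of_forall fun x => ?_)
      show |h x| * F x = ‖h x‖ * ‖F x‖
      rw [Real.norm_eq_abs, Real.norm_eq_abs, abs_of_nonneg (hFnonneg x)]
    rw [hceq]
    exact integral_mul_norm_le_Lp_mul_Lq h22 hh2 hF2
  -- express eLpNorms as integrals
  have h2ne0 : (2 : ℝ≥0∞) ≠ 0 := by norm_num
  have h2netop : (2 : ℝ≥0∞) ≠ ⊤ := by norm_num
  have hhnorm : eLpNorm h 2 μ
      = ENNReal.ofReal ((∫ x, ‖h x‖ ^ (2 : ℝ) ∂μ) ^ ((1 : ℝ) / 2)) := by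
    rw [hh.eLpNorm_eq_integral_rpow_norm h2ne0 h2netop]
    norm_num
  have hFnorm : eLpNorm F 2 μ
      = ENNReal.ofReal ((∫ x, ‖F x‖ ^ (2 : ℝ) ∂μ) ^ ((1 : ℝ) / 2)) := by
    rw [hF.eLpNorm_eq_integral_rpow_norm h2ne0 h2netop]
    norm_num
  have hAnonneg : 0 ≤ (∫ x, ‖h x‖ ^ (2 : ℝ) ∂μ) ^ ((1 : ℝ) / 2) :=
    Real.rpow_nonneg (integral_nonneg fun x => Real.rpow_nonneg (norm_nonneg _) _) _
  -- put everything together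
  refine hmono.trans ?_
  rw [hsmul]
  calc ENNReal.ofReal c * eLpNorm G 2 μ
      ≤ ENNReal.ofReal ((∫ x, ‖h x‖ ^ (2 : ℝ) ∂μ) ^ ((1 : ℝ) / 2)
          * (∫ x, ‖F x‖ ^ (2 : ℝ) ∂μ) ^ ((1 : ℝ) / 2)) * eLpNorm G 2 μ := by
        exact mul_le_mul_left (ENNReal.ofReal_le_ofReal hCS) _
    _ = eLpNorm h 2 μ * (eLpNorm F 2 μ * eLpNorm G 2 μ) := by
        rw [ENNReal.ofReal_mul hAnonneg, hhnorm, hFnorm, mul_assoc]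
    _ ≤ eLpNorm h 2 μ * ENNReal.ofReal C := by
        gcongr
        rw [hCdef]
        calc eLpNorm F 2 μ * eLpNorm G 2 μ
            = ENNReal.ofReal ((eLpNorm F 2 μ * eLpNorm G 2 μ).toReal) :=
              (ENNReal.ofReal_toReal hFG_ne_top).symm
          _ ≤ ENNReal.ofReal ((eLpNorm F 2 μ * eLpNorm G 2 μ).toReal + 1) :=
              ENNReal.ofReal_le_ofReal (by linarith)
    _ = ENNReal.ofReal C * eLpNorm h 2 μ := mul_comm _ _
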